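/- In the group G = ⟨X, Y, Z | X^n = Z^α, Y^2 = 1, YX = X^{n-1}YZ^γ, YZ = ZY, XZ = ZX, Z^m = 1⟩, conjugation by Y inverts the element X^2 Z^{-α-γ}: that is, Y (X^2 Z^{-α-γ}) Y^{-1} = (X^2 Z^{-α-γ})^{-1}. Consequently the cyclic subgroup generated by X^2 Z^{-α-γ} is normal in G. -/

import Mathlib

/-- Relations for the central extension of the dihedral group `D_{2n}` by `ℤ/mℤ`
with parameters `(α, β, γ)`: generators `X = 0`, `Y = 1`, `Z = 2`. -/
def grels (n m : ℕ) (α β γ : ℤ) : Set (FreeGroup (Fin 3)) :=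
  { FreeGroup.of (0 : Fin 3) ^ n * (FreeGroup.of (2 : Fin 3) ^ α)⁻¹,
    FreeGroup.of (1 : Fin 3) ^ 2 * (FreeGroup.of (2 : Fin 3) ^ β)⁻¹,
    FreeGroup.of (1 : Fin 3) * FreeGroup.of (0 : Fin 3) *
      (FreeGroup.of (0 : Fin 3) ^ (n - 1) * FreeGroup.of (1 : Fin 3) *
        FreeGroup.of (2 : Fin 3) ^ γ)⁻¹,
    FreeGroup.of (1 : Fin 3) * FreeGroup.of (2 : Fin 3) *
      (FreeGroup.of (2 : Fin 3) * FreeGroup.of (1 : Fin 3))⁻¹,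
    FreeGroup.of (0 : Fin 3) * FreeGroup.of (2 : Fin 3) *
      (FreeGroup.of (2 : Fin 3) * FreeGroup.of (0 : Fin 3))⁻¹,
    FreeGroup.of (2 : Fin 3) ^ m }

/-- The central extension `G(α, β, γ)` of `D_{2n}` by `ℤ/mℤ`. -/
abbrev GG (n m : ℕ) (α β γ : ℤ) : Type := PresentedGroup (grels n m α β γ)

def gX (n m : ℕ) (α β γ : ℤ) : GG n m α β γ := PresentedGroup.of 0
def gY (n m : ℕ) (α β γ : ℤ) : GG n m α β γ := PresentedGroup.of 1
def gZ (n m : ℕ) (α β γ : ℤ) : GG n m α β γ := PresentedGroup.of 2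

lemma grel_eq_one (n m : ℕ) (α β γ : ℤ) {r : FreeGroup (Fin 3)} (h : r ∈ grels n m α β γ) :
    PresentedGroup.mk (grels n m α β γ) r = 1 :=
  (QuotientGroup.eq_one_iff r).mpr (Subgroup.subset_normalClosure h)

lemma grel1 (n m : ℕ) (α β γ : ℤ) : gX n m α β γ ^ n = gZ n m α β γ ^ α := by
  have := grel_eq_one n m α β γ (show _ ∈ grels n m α β γ from Or.inl rfl)
  simp only [map_mul, map_pow, map_zpow, map_inv, mul_inv_eq_one] at this
  exact this

lemma grel2 (n m : ℕ) (α β γ : ℤ) : gY n m α β γ ^ 2 = gZ n m α β γ ^ β := by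
  have := grel_eq_one n m α β γ (show _ ∈ grels n m α β γ from Or.inr (Or.inl rfl))
  simp only [map_mul, map_pow, map_zpow, map_inv, mul_inv_eq_one] at this
  exact this

lemma grel3 (n m : ℕ) (α β γ : ℤ) : gY n m α β γ * gX n m α β γ =
    gX n m α β γ ^ (n - 1) * gY n m α β γ * gZ n m α β γ ^ γ := by
  have := grel_eq_one n m α β γ (show _ ∈ grels n m α β γ from Or.inr (Or.inr (Or.inl rfl)))
  simp only [map_mul, map_pow, map_zpow, map_inv, mul_inv_eq_one] at this
  exact this

lemma grel4 (n m : ℕ) (α β γ : ℤ) : gY n m α β γ * gZ n m α β γ = gZ n m α β γ * gY n m α β γ := by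
  have := grel_eq_one n m α β γ
    (show _ ∈ grels n m α β γ from Or.inr (Or.inr (Or.inr (Or.inl rfl))))
  simp only [map_mul, map_pow, map_zpow, map_inv, mul_inv_eq_one] at this
  exact this

lemma grel5 (n m : ℕ) (α β γ : ℤ) : gX n m α β γ * gZ n m α β γ = gZ n m α β γ * gX n m α β γ := by
  have := grel_eq_one n m α β γ
    (show _ ∈ grels n m α β γ from Or.inr (Or.inr (Or.inr (Or.inr (Or.inl rfl)))))
  simp only [map_mul, map_pow, map_zpow, map_inv, mul_inv_eq_one] at this
  exact this

/-- In `G(α, 0, γ)`, conjugation by `Y` inverts `X² Z^{-α-γ}`; consequently the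
cyclic subgroup it generates is normal. -/
theorem stmt3 (n m : ℕ) (hn : 3 ≤ n) (hm : 1 ≤ m) (α γ : ℤ) :
    gY n m α 0 γ * ((gX n m α 0 γ) ^ 2 * (gZ n m α 0 γ) ^ (-α - γ)) * (gY n m α 0 γ)⁻¹ =
      ((gX n m α 0 γ) ^ 2 * (gZ n m α 0 γ) ^ (-α - γ))⁻¹ ∧
    (Subgroup.zpowers ((gX n m α 0 γ) ^ 2 * (gZ n m α 0 γ) ^ (-α - γ))).Normal := by
  set X := gX n m α 0 γ with hXdef
  set Y := gY n m α 0 γ with hYdef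
  set Z := gZ n m α 0 γ with hZdef
  have h1 : X ^ n = Z ^ α := grel1 n m α 0 γ
  have h2 : Y ^ 2 = 1 := by simpa using grel2 n m α 0 γ
  have h3 : Y * X = X ^ (n - 1) * Y * Z ^ γ := grel3 n m α 0 γ
  have hYZ : Commute Y Z := grel4 n m α 0 γ
  have hXZ : Commute X Z := grel5 n m α 0 γ
  have hYY : Y * Y = 1 := by rw [← sq]; exact h2
  have hYinv : Y⁻¹ = Y := by rw [inv_eq_of_mul_eq_one_right hYY]
  -- X^(n-1) = Z^α * X⁻¹
  have hXn1 : X ^ (n - 1) = Z ^ α * X⁻¹ := by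
    have hpow : X ^ (n - 1) * X = X ^ n := by
      rw [← pow_succ]; congr 1; omega
    have := eq_mul_inv_of_mul_eq hpow
    rw [this, h1]
  -- conjugation of X by Y
  have key : Y * X * Y⁻¹ = Z ^ (α + γ) * X⁻¹ := by
    rw [hYinv]
    calc Y * X * Y = X ^ (n - 1) * Y * Z ^ γ * Y := by rw [h3]
      _ = X ^ (n - 1) * (Y * Z ^ γ * Y) := by group
      _ = X ^ (n - 1) * (Z ^ γ * (Y * Y)) := by rw [(hYZ.zpow_right γ).eq]; group
      _ = X ^ (n - 1) * Z ^ γ := by rw [hYY, mul_one]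
      _ = Z ^ α * X⁻¹ * Z ^ γ := by rw [hXn1]
      _ = Z ^ α * (X⁻¹ * Z ^ γ) := by rw [mul_assoc]
      _ = Z ^ α * (Z ^ γ * X⁻¹) := by rw [(hXZ.inv_left.zpow_right γ).eq]
      _ = Z ^ (α + γ) * X⁻¹ := by rw [zpow_add]; group
  set w : GG n m α 0 γ := X ^ 2 * Z ^ (-α - γ) with hw
  have hwinv : w⁻¹ = Z ^ (α + γ) * (X⁻¹ * X⁻¹) := by
    rw [hw, mul_inv_rev, ← zpow_neg]
    have : -(-α - γ) = α + γ := by ring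
    rw [this, sq, mul_inv_rev]
  have part1 : Y * w * Y⁻¹ = w⁻¹ := by
    have expand : Y * w * Y⁻¹ = (Y * X * Y⁻¹) * (Y * X * Y⁻¹) * (Y * Z ^ (-α - γ) * Y⁻¹) := by
      rw [hw, sq]; group
    have conjZ : Y * Z ^ (-α - γ) * Y⁻¹ = Z ^ (-α - γ) := by
      rw [(hYZ.zpow_right (-α - γ)).eq]; group
    rw [expand, key, conjZ, hwinv]
    have s1 : X⁻¹ * Z ^ (α + γ) = Z ^ (α + γ) * X⁻¹ := (hXZ.inv_left.zpow_right (α + γ)).eq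
    have s2 : X⁻¹ * Z ^ (-α - γ) = Z ^ (-α - γ) * X⁻¹ := (hXZ.inv_left.zpow_right (-α - γ)).eq
    calc Z ^ (α + γ) * X⁻¹ * (Z ^ (α + γ) * X⁻¹) * Z ^ (-α - γ)
        = Z ^ (α + γ) * (X⁻¹ * Z ^ (α + γ)) * (X⁻¹ * Z ^ (-α - γ)) := by group
      _ = Z ^ (α + γ) * (Z ^ (α + γ) * X⁻¹) * (Z ^ (-α - γ) * X⁻¹) := by rw [s1, s2]
      _ = Z ^ (α + γ) * Z ^ (α + γ) * (X⁻¹ * Z ^ (-α - γ)) * X⁻¹ := by group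
      _ = Z ^ (α + γ) * Z ^ (α + γ) * (Z ^ (-α - γ) * X⁻¹) * X⁻¹ := by rw [s2]
      _ = Z ^ (α + γ + (α + γ) + (-α - γ)) * (X⁻¹ * X⁻¹) := by
          rw [zpow_add, zpow_add]; group
      _ = Z ^ (α + γ) * (X⁻¹ * X⁻¹) := by
          congr 1
          · congr 1; ring
  refine ⟨part1, ?_⟩
  -- commutation facts with w
  have hXw : Commute X w := ((Commute.refl X).pow_right 2).mul_right (hXZ.zpow_right _)
  have hZw : Commute Z w := ((hXZ.symm.pow_right 2).mul_right ((Commute.refl Z).zpow_right _))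
  have memN : ∀ g : GG n m α 0 γ, g * w * g⁻¹ ∈ Subgroup.zpowers w →
      g⁻¹ * w * g ∈ Subgroup.zpowers w → g ∈ Subgroup.normalizer (Subgroup.zpowers w : Set (GG n m α 0 γ)) := by
    intro g hg hg'
    rw [Subgroup.mem_normalizer_iff]
    intro h
    constructor
    · intro hh
      obtain ⟨k, rfl⟩ := Subgroup.mem_zpowers_iff.mp hh
      have : g * w ^ k * g⁻¹ = (g * w * g⁻¹) ^ k := by rw [conj_zpow]
      rw [this]
      exact Subgroup.zpow_mem _ hg k
    · intro hh
      obtain ⟨k, hk⟩ := Subgroup.mem_zpowers_iff.mp hh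
      have heq : h = g⁻¹ * (g * h * g⁻¹) * g := by group
      rw [heq, ← hk]
      have h5 : g⁻¹ * w ^ k * g = (g⁻¹ * w * g) ^ k := by
        have := conj_zpow (i := k) (a := g⁻¹) (b := w)
        simp only [inv_inv] at this
        exact this.symm
      rw [show g⁻¹ * w ^ k * g = (g⁻¹ * w * g) ^ k from h5]
      exact Subgroup.zpow_mem _ hg' k
  have comm_mem : ∀ g : GG n m α 0 γ, Commute g w → g ∈ Subgroup.normalizer (Subgroup.zpowers w : Set (GG n m α 0 γ)) := by
    intro g hc
    refine memN g ?_ ?_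
    · rw [hc.eq, mul_assoc, mul_inv_cancel, mul_one]; exact Subgroup.mem_zpowers w
    · rw [hc.inv_left.eq, mul_assoc, inv_mul_cancel, mul_one]; exact Subgroup.mem_zpowers w
  have hNtop : Subgroup.normalizer (Subgroup.zpowers w : Set (GG n m α 0 γ)) = ⊤ := by
    rw [eq_top_iff, ← PresentedGroup.closure_range_of (grels n m α 0 γ), Subgroup.closure_le]
    rintro _ ⟨i, rfl⟩
    fin_cases i
    · exact comm_mem X hXw
    · refine memN Y ?_ ?_
      · rw [part1]; exact Subgroup.inv_mem _ (Subgroup.mem_zpowers w)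
      · have : Y⁻¹ * w * Y = Y * w * Y⁻¹ := by rw [hYinv]
        rw [this, part1]
        exact Subgroup.inv_mem _ (Subgroup.mem_zpowers w)
    · exact comm_mem Z hZw
  exact Subgroup.normalizer_eq_top_iff.mp hNtop
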